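/- Let φ : X → Y be a mapping between Banach spaces and x̄ ∈ X. Suppose φ is Fréchet differentiable at x̄ and there exist κ, r > 0 such that d(x̄, φ⁻¹(y)) ≤ κ‖φ(x̄) − y‖ for all y ∈ Y with ‖y − φ(x̄)‖ < r. Then the range ∇φ(x̄)(X) of the Fréchet derivative ∇φ(x̄) is a closed linear subspace of Y. -/

import Mathlib

open Filter Metric Set Pointwise Topology
open scoped ENNReal

noncomputable section

/-- The Bouligand (contingent) tangent cone of `A` at `u`. -/
def bouligand {X : Type*} [NormedAddCommGroup X] [NormedSpace ℝ X] (A : Set X) (u : X) :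
    Set X :=
  {v | ∃ (vs : ℕ → X) (ts : ℕ → ℝ),
    Tendsto vs atTop (𝓝 v) ∧ Tendsto ts atTop (𝓝 0) ∧ (∀ n, 0 < ts n) ∧
    ∀ n, u + ts n • vs n ∈ A}

/-- The Shapiro first order contact property of `A` at `a`. -/
def shapiro {X : Type*} [NormedAddCommGroup X] [NormedSpace ℝ X] (A : Set X) (a : X) : Prop :=
  ∀ ε > 0, ∃ δ > 0, ∀ x ∈ A ∩ ball a δ, ∀ u ∈ A ∩ ball a δ,
    infDist (x - u) (bouligand A u) ≤ ε * ‖x - u‖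

/-- The lower Hadamard directional derivative of `φ` at `x` in direction `h`. -/
def hadamardDeriv {X : Type*} [NormedAddCommGroup X] [NormedSpace ℝ X]
    (φ : X → EReal) (x h : X) : EReal :=
  liminf (fun p : ℝ × X => (((1 : ℝ) / p.1 : ℝ) : EReal) * (φ (x + p.1 • p.2) - φ x))
    ((𝓝[>] (0 : ℝ)) ×ˢ 𝓝 h)

/-- The epigraph of an `EReal`-valued function, as a subset of `X × ℝ`. -/
def epigraph {X : Type*} (φ : X → EReal) : Set (X × ℝ) := {p | φ p.1 ≤ (p.2 : EReal)}

/-- The Hausdorff-Pompeiu excess of `C` beyond `D`. -/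
def excess {X : Type*} [PseudoEMetricSpace X] (C D : Set X) : ℝ≥0∞ :=
  ⨆ c ∈ C, EMetric.infEdist c D

/-- Metric regularity of `φ` around `xbar` (for `φ xbar`). -/
def metReg {X Y : Type*} [NormedAddCommGroup X] [NormedAddCommGroup Y]
    (φ : X → Y) (xbar : X) : Prop :=
  ∃ κ > (0 : ℝ), ∃ U ∈ 𝓝 xbar, ∃ V ∈ 𝓝 (φ xbar), ∀ x ∈ U, ∀ y ∈ V,
    EMetric.infEdist x (φ ⁻¹' {y}) ≤ ENNReal.ofReal (κ * ‖φ x - y‖)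
theorem range_fderiv_closed_of_local_metric_estimate {X Y : Type*}
    [NormedAddCommGroup X] [NormedSpace ℝ X] [CompleteSpace X]
    [NormedAddCommGroup Y] [NormedSpace ℝ Y] [CompleteSpace Y]
    (φ : X → Y) (xbar : X) (φ' : X →L[ℝ] Y) (hdiff : HasFDerivAt φ φ' xbar)
    (κ r : ℝ) (hκ : 0 < κ) (hr : 0 < r)
    (hreg : ∀ y : Y, ‖y - φ xbar‖ < r →
      EMetric.infEdist xbar (φ ⁻¹' {y}) ≤ ENNReal.ofReal (κ * ‖φ xbar - y‖)) :
    IsClosed (Set.range φ') := by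
  -- Step A: approximate controlled surjectivity of `φ'`.
  have hA : ∀ v : Y, ∃ x : X, ‖x‖ ≤ (κ + 1) * ‖v‖ ∧ ‖φ' x - v‖ ≤ (1/2) * ‖v‖ := by
    intro v
    rcases eq_or_ne v 0 with hv | hv
    · exact ⟨0, by simp [hv]⟩
    have hvn : 0 < ‖v‖ := norm_pos_iff.mpr hv
    have hκ1 : (0:ℝ) < κ + 1 := by linarith
    have hδ : (0:ℝ) < 1 / (2 * (κ + 1)) := by positivity
    have hlo := hdiff.isLittleO.def hδ
    rw [Metric.eventually_nhds_iff] at hlo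
    obtain ⟨ρ, hρ, hest⟩ := hlo
    set t : ℝ := min (r / (2 * ‖v‖)) (ρ / ((κ + 1) * ‖v‖)) with ht_def
    have ht : 0 < t := lt_min (by positivity) (by positivity)
    have htr : t * ‖v‖ < r := by
      have h1 : t * ‖v‖ ≤ r / (2 * ‖v‖) * ‖v‖ :=
        mul_le_mul_of_nonneg_right (min_le_left _ _) hvn.le
      have h1' : r / (2 * ‖v‖) * ‖v‖ = r / 2 := by field_simp
      linarith
    have htρ : (κ + 1) * t * ‖v‖ ≤ ρ := by
      have h2 : t * ‖v‖ ≤ ρ / ((κ + 1) * ‖v‖) * ‖v‖ :=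
        mul_le_mul_of_nonneg_right (min_le_right _ _) hvn.le
      have h2' : ρ / ((κ + 1) * ‖v‖) * ‖v‖ = ρ / (κ + 1) := by field_simp
      calc (κ + 1) * t * ‖v‖ = (κ + 1) * (t * ‖v‖) := by ring
      _ ≤ (κ + 1) * (ρ / (κ + 1)) := by nlinarith
      _ = ρ := by field_simp
    set y : Y := φ xbar + t • v with hy_def
    have hy1 : ‖y - φ xbar‖ < r := by
      simp only [hy_def, add_sub_cancel_left, norm_smul, Real.norm_eq_abs,
        abs_of_pos ht]
      exact htr
    have hy2 : ‖φ xbar - y‖ = t * ‖v‖ := by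
      simp only [hy_def]
      rw [show φ xbar - (φ xbar + t • v) = -(t • v) by abel, norm_neg, norm_smul,
        Real.norm_eq_abs, abs_of_pos ht]
    have hlt : EMetric.infEdist xbar (φ ⁻¹' {y}) <
        ENNReal.ofReal ((κ + 1) * t * ‖v‖) := by
      refine lt_of_le_of_lt (hreg y hy1) ?_
      rw [hy2, ENNReal.ofReal_lt_ofReal_iff (by positivity)]
      nlinarith
    obtain ⟨x, hx_mem, hx_d⟩ := EMetric.infEdist_lt_iff.mp hlt
    rw [edist_lt_ofReal] at hx_d
    have hφx : φ x = y := hx_mem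
    have hxd : ‖x - xbar‖ < (κ + 1) * t * ‖v‖ := by
      rwa [dist_comm, dist_eq_norm] at hx_d
    have hxρ : dist x xbar < ρ := by
      rw [dist_eq_norm]; exact lt_of_lt_of_le hxd htρ
    have hkey : ‖φ x - φ xbar - φ' (x - xbar)‖ ≤ 1 / (2 * (κ + 1)) * ‖x - xbar‖ :=
      hest hxρ
    have hkey2 : ‖t • v - φ' (x - xbar)‖ ≤ 1/2 * (t * ‖v‖) := by
      have h3 : φ x - φ xbar = t • v := by rw [hφx, hy_def]; abel
      rw [h3] at hkey
      calc ‖t • v - φ' (x - xbar)‖ ≤ 1 / (2 * (κ + 1)) * ‖x - xbar‖ := hkey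
      _ ≤ 1 / (2 * (κ + 1)) * ((κ + 1) * t * ‖v‖) := by
          apply mul_le_mul_of_nonneg_left hxd.le (by positivity)
      _ = 1/2 * (t * ‖v‖) := by field_simp
    refine ⟨t⁻¹ • (x - xbar), ?_, ?_⟩
    · rw [norm_smul, Real.norm_eq_abs, abs_of_pos (inv_pos.mpr ht)]
      rw [inv_mul_le_iff₀ ht]
      calc ‖x - xbar‖ ≤ (κ + 1) * t * ‖v‖ := hxd.le
      _ = t * ((κ + 1) * ‖v‖) := by ring
    · have : φ' (t⁻¹ • (x - xbar)) - v = t⁻¹ • (φ' (x - xbar) - t • v) := by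
        rw [map_smul, smul_sub, smul_smul, inv_mul_cancel₀ ht.ne', one_smul]
      rw [this, norm_smul, Real.norm_eq_abs, abs_of_pos (inv_pos.mpr ht),
        norm_sub_rev, inv_mul_le_iff₀ ht]
      calc ‖t • v - φ' (x - xbar)‖ ≤ 1/2 * (t * ‖v‖) := hkey2
      _ = t * (1/2 * ‖v‖) := by ring
  -- Step B: surjectivity by iteration.
  have hsurj : Function.Surjective φ' := by
    intro v
    choose f hf1 hf2 using hA
    set g : Y → Y := fun z => z - φ' (f z) with hg_def
    set w : ℕ → Y := fun n => g^[n] v with hw_def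
    set x : ℕ → X := fun n => f (w n) with hx_def
    have hw_succ : ∀ n, w (n + 1) = w n - φ' (x n) := by
      intro n
      simp only [hw_def, Function.iterate_succ_apply', hx_def, hg_def]
    have hw_half : ∀ n, ‖w (n + 1)‖ ≤ 1/2 * ‖w n‖ := by
      intro n
      rw [hw_succ n]
      calc ‖w n - φ' (x n)‖ = ‖φ' (x n) - w n‖ := norm_sub_rev _ _
      _ ≤ 1/2 * ‖w n‖ := hf2 (w n)
    have hw_bound : ∀ n, ‖w n‖ ≤ (1/2)^n * ‖v‖ := by
      intro n
      induction n with
      | zero => simp [hw_def]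
      | succ n ih =>
        calc ‖w (n+1)‖ ≤ 1/2 * ‖w n‖ := hw_half n
        _ ≤ 1/2 * ((1/2)^n * ‖v‖) := by linarith
        _ = (1/2)^(n+1) * ‖v‖ := by ring
    have hx_bound : ∀ n, ‖x n‖ ≤ (κ + 1) * ‖v‖ * (1/2)^n := by
      intro n
      calc ‖x n‖ ≤ (κ + 1) * ‖w n‖ := hf1 (w n)
      _ ≤ (κ + 1) * ((1/2)^n * ‖v‖) := by
          apply mul_le_mul_of_nonneg_left (hw_bound n) (by linarith)
      _ = (κ + 1) * ‖v‖ * (1/2)^n := by ring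
    have hsum : Summable x := by
      apply Summable.of_norm_bounded ?_ hx_bound
      exact (summable_geometric_of_lt_one (by norm_num) (by norm_num)).mul_left _
    have hw_to0 : Tendsto w atTop (𝓝 0) := by
      rw [tendsto_zero_iff_norm_tendsto_zero]
      apply squeeze_zero (fun n => norm_nonneg _) hw_bound
      rw [show (0:ℝ) = 0 * ‖v‖ by ring]
      exact (tendsto_pow_atTop_nhds_zero_of_lt_one (by norm_num) (by norm_num)).mul_const _
    have hpartial : ∀ n, ∑ i ∈ Finset.range n, φ' (x i) = v - w n := by
      intro n
      induction n with
      | zero => simp [hw_def]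
      | succ n ih =>
        rw [Finset.sum_range_succ, ih, hw_succ n]; abel
    have hHS : HasSum (fun n => φ' (x n)) v := by
      have hsum2 : Summable (fun n => φ' (x n)) := hsum.map φ' φ'.continuous
      rw [hsum2.hasSum_iff_tendsto_nat]
      simp only [hpartial]
      have := (tendsto_const_nhds (x := v) (f := atTop (α := ℕ))).sub hw_to0
      simpa using this
    exact ⟨∑' n, x n, (hHS.unique (hsum.hasSum.map φ' φ'.continuous)).symm⟩
  rw [Set.range_eq_univ.mpr hsurj]
  exact isClosed_univ
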